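/- arXiv:2603.03167 — 2 statements merged into one kernel-verified Lean document; each statement's English description precedes it below -/
import Mathlib

section
/- Let μ be a partial n-ary multiplication on a binary partial group P determined by a full parenthesization of n letters, and let μ̄ be the partial multiplication given by the mirrored parenthesization. For a word v of length n, write v† for the word obtained by reversing v and inverting each letter. If μ(v) is defined, then μ̄(v†) is defined and μ(v) = μ̄(v†)†. -/
/-- A unital partial magma: a partially defined binary operation (encoded via
`Option`) with a two-sided unit. -/
structure UnitalPartialMagma (P : Type*) where
  mul : P → P → Option P
  one : P
  mul_one : ∀ a, mul a one = some a
  one_mul : ∀ a, mul one a = some a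

/-- A binary partial group: a unital partial magma where each element has an
inverse `inv a` with: `a*b` defined implies `(inv a)*(a*b)` defined and equal
to `b`, and `b*a` defined implies `(b*a)*(inv a)` defined and equal to `b`. -/
structure BinaryPartialGroup (P : Type*) extends UnitalPartialMagma P where
  inv : P → P
  inv_left : ∀ a b c, mul a b = some c → mul (inv a) c = some b
  inv_right : ∀ a b c, mul b a = some c → mul c (inv a) = some b

/-- Full parenthesizations of words, as binary trees. -/
inductive PTree : Type where
  | leaf : PTree
  | node : PTree → PTree → PTree

/-- The number of letters a parenthesization applies to. -/
def PTree.size : PTree → Nat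
  | .leaf => 1
  | .node l r => l.size + r.size

/-- The mirrored parenthesization. -/
def PTree.mirror : PTree → PTree
  | .leaf => .leaf
  | .node l r => .node r.mirror l.mirror

/-- The partial iterated multiplication of a word determined by a full
parenthesization. -/
def evalTree {P : Type*} (M : UnitalPartialMagma P) : PTree → List P → Option P
  | .leaf, [a] => some a
  | .leaf, _ => none
  | .node l r, w =>
      (evalTree M l (w.take l.size)).bind fun x =>
        (evalTree M r (w.drop l.size)).bind fun y => M.mul x y

/-- `IsProd M w a` says that every full parenthesization of the word `w` gives a
defined iterated product, and all these products equal `a`; the empty word has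
product the unit.  Thus `w ∈ BP_n` iff `∃ a, IsProd M w a`. -/
def IsProd {P : Type*} (M : UnitalPartialMagma P) (w : List P) (a : P) : Prop :=
  (w = [] → a = M.one) ∧ ∀ t : PTree, t.size = w.length → evalTree M t w = some a


private lemma bpg_inv_inv {P : Type*} (G : BinaryPartialGroup P) (a : P) :
    G.inv (G.inv a) = a := by
  have h2 := G.inv_left a G.one a (G.mul_one a)
  have h3 := G.inv_left (G.inv a) a G.one h2
  rw [G.mul_one] at h3
  exact Option.some.inj h3

private lemma bpg_mul_inv_rev {P : Type*} (G : BinaryPartialGroup P) {a b c : P}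
    (h : G.mul a b = some c) : G.mul (G.inv b) (G.inv a) = some (G.inv c) := by
  have h1 := G.inv_left a b c h
  have h2 := G.inv_right c (G.inv a) b h1
  exact G.inv_left b (G.inv c) (G.inv a) h2

private lemma ptree_mirror_size (t : PTree) : t.mirror.size = t.size := by
  induction t with
  | leaf => rfl
  | node l r ihl ihr => simp [PTree.mirror, PTree.size, ihl, ihr]; omega

private lemma bpg_key {P : Type*} (G : BinaryPartialGroup P) (t : PTree) :
    ∀ (v : List P) (a : P), t.size = v.length →
      evalTree G.toUnitalPartialMagma t v = some a →
      evalTree G.toUnitalPartialMagma t.mirror ((v.map G.inv).reverse) = some (G.inv a) := by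
  induction t with
  | leaf =>
    intro v a _ h
    match v with
    | [x] =>
      simp only [evalTree, PTree.mirror] at h ⊢
      simp_all
      rfl
  | node l r ihl ihr =>
    intro v a ht h
    simp only [evalTree, Option.bind_eq_some_iff] at h
    obtain ⟨x, hx, y, hy, hxy⟩ := h
    have hsz : l.size + r.size = v.length := ht
    have hl : l.size = (v.take l.size).length := by rw [List.length_take]; omega
    have hr : r.size = (v.drop l.size).length := by rw [List.length_drop]; omega
    have Hx := ihl _ _ hl hx
    have Hy := ihr _ _ hr hy
    simp only [PTree.mirror, evalTree, Option.bind_eq_some_iff]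
    refine ⟨G.inv y, ?_, G.inv x, ?_, bpg_mul_inv_rev G hxy⟩
    · have : ((v.map G.inv).reverse).take r.mirror.size
          = (((v.drop l.size)).map G.inv).reverse := by
        rw [ptree_mirror_size, List.take_reverse, List.map_drop]
        congr 2
        simp; omega
      rw [this]; exact Hy
    · have : ((v.map G.inv).reverse).drop r.mirror.size
          = (((v.take l.size)).map G.inv).reverse := by
        rw [ptree_mirror_size, List.drop_reverse, List.map_take]
        congr 2
        simp; omega
      rw [this]; exact Hx

/-- If `μ(v)` is defined, then the mirrored multiplication `μ̄` applied to the
reversed-and-inverted word `v†` is defined, and `μ(v) = μ̄(v†)†`. -/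
theorem stmt_11 {P : Type*} (G : BinaryPartialGroup P) (t : PTree) (v : List P)
    (ht : t.size = v.length) (a : P)
    (h : evalTree G.toUnitalPartialMagma t v = some a) :
    ∃ x, evalTree G.toUnitalPartialMagma t.mirror ((v.map G.inv).reverse) = some x ∧
      a = G.inv x := ⟨G.inv a, bpg_key G t v a ht h, (bpg_inv_inv G a).symm⟩
end

section
/- Let P be a binary partial group and BP_n ⊆ P^n the set of words all of whose fully parenthesized products are defined and equal. Then BP_n is closed under deleting the first or last letter: if (a_1, ..., a_n) ∈ BP_n with n ≥ 1, then (a_2, ..., a_n) ∈ BP_{n-1} and (a_1, ..., a_{n-1}) ∈ BP_{n-1}. -/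
private def combT : Nat → PTree
  | 0 => .leaf
  | n+1 => .node .leaf (combT n)

private lemma combT_size (n : Nat) : (combT n).size = n + 1 := by
  induction n with
  | zero => rfl
  | succ n ih => simp [combT, PTree.size, ih]; omega

private lemma PTree.size_pos (t : PTree) : 1 ≤ t.size := by
  induction t with
  | leaf => exact le_refl 1
  | node l r ihl ihr => simp [PTree.size]; omega

/-- `BP_n` is closed under deleting the first or last letter. -/
theorem stmt_16 {P : Type*} (G : BinaryPartialGroup P) (w : List P) (a : P)
    (hw : w ≠ []) (h : IsProd G.toUnitalPartialMagma w a) :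
    (∃ b, IsProd G.toUnitalPartialMagma w.tail b) ∧
    (∃ b, IsProd G.toUnitalPartialMagma w.dropLast b) := by
  obtain ⟨h1, h2⟩ := h
  constructor
  · -- delete first letter
    obtain ⟨x, w', rfl⟩ := List.exists_cons_of_ne_nil hw
    simp only [List.tail_cons]
    -- key: for any t' of right size, mul (inv x) a = some (value of t')
    have key : ∀ t' : PTree, t'.size = w'.length →
        ∃ y, evalTree G.toUnitalPartialMagma t' w' = some y ∧
          G.mul (G.inv x) a = some y := by
      intro t' ht'
      have h := h2 (.node .leaf t') (by simp [PTree.size, ht']; omega)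
      have hx : evalTree G.toUnitalPartialMagma .leaf [x] = some x := rfl
      simp only [evalTree, PTree.size, List.take_cons, List.take_succ_cons, List.take_zero,
        List.drop_succ_cons, List.drop_zero, hx, Option.bind_some] at h
      rw [Option.bind_eq_some_iff] at h
      obtain ⟨y, hy, hmul⟩ := h
      exact ⟨y, hy, G.inv_left x y a hmul⟩
    rcases eq_or_ne w' [] with rfl | hw'
    · refine ⟨G.toUnitalPartialMagma.one, fun _ => rfl, fun t ht => ?_⟩
      have := PTree.size_pos t
      simp at ht; omega
    · have hlen : 1 ≤ w'.length := List.length_pos_iff.mpr hw'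
      obtain ⟨y0, hy0, hm0⟩ := key (combT (w'.length - 1))
        (by rw [combT_size]; omega)
      refine ⟨y0, fun h => absurd h hw', fun t ht => ?_⟩
      obtain ⟨y, hy, hm⟩ := key t ht
      rw [hm0, Option.some_inj] at hm
      rw [hy, hm]
  · -- delete last letter
    rcases w.eq_nil_or_concat with rfl | ⟨u, x, rfl⟩
    · exact absurd rfl hw
    simp only [List.concat_eq_append] at *
    rw [List.dropLast_concat]
    have key : ∀ t' : PTree, t'.size = u.length →
        ∃ y, evalTree G.toUnitalPartialMagma t' u = some y ∧
          G.mul a (G.inv x) = some y := by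
      intro t' ht'
      have h := h2 (.node t' .leaf) (by simp [PTree.size, ht'])
      have hx : evalTree G.toUnitalPartialMagma .leaf [x] = some x := rfl
      simp only [evalTree, ht', List.take_left, List.drop_left, hx] at h
      rw [Option.bind_eq_some_iff] at h
      obtain ⟨y, hy, hmul⟩ := h
      rw [Option.bind_some] at hmul
      exact ⟨y, hy, G.inv_right x y a hmul⟩
    rcases eq_or_ne u [] with rfl | hu
    · refine ⟨G.toUnitalPartialMagma.one, fun _ => rfl, fun t ht => ?_⟩
      have := PTree.size_pos t
      simp at ht; omega
    · have hlen : 1 ≤ u.length := List.length_pos_iff.mpr hu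
      obtain ⟨y0, hy0, hm0⟩ := key (combT (u.length - 1))
        (by rw [combT_size]; omega)
      refine ⟨y0, fun h => absurd h hu, fun t ht => ?_⟩
      obtain ⟨y, hy, hm⟩ := key t ht
      rw [hm0, Option.some_inj] at hm
      rw [hy, hm]
end
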